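/- Assume ◊⁺_{β⁺} holds for a regular cardinal β. Then there exists a β⁺-Kurepa tree, i.e., a tree of height β⁺ all of whose levels have cardinality at most β, with at least β⁺⁺ cofinal branches. -/

import Mathlib

open Cardinal Set

/-- The restriction of `<` to the set of predecessors of `t`. -/
def predRel {T : Type*} [PartialOrder T] (t : T) : Set.Iio t → Set.Iio t → Prop :=
  fun a b => (a : T) < (b : T)

/-- A set-theoretic tree: a partial order in which the predecessors of every point are
well-ordered. -/
structure STree : Type 1 where
  carrier : Type
  [po : PartialOrder carrier]
  wo : ∀ t : carrier, IsWellOrder (Set.Iio t) (predRel t)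

attribute [instance] STree.po

/-- The height (level) of a node: the order type of its set of predecessors. -/
noncomputable def STree.ht (S : STree) (t : S.carrier) : Ordinal.{0} :=
  @Ordinal.type _ (predRel t) (S.wo t)

/-- The `α`-th level of the tree. -/
def STree.Level (S : STree) (α : Ordinal.{0}) : Set S.carrier := {t | S.ht t = α}

/-- A cofinal branch of length `h`: a chain meeting every level `α < h`. -/
def STree.IsCofinalBranch (S : STree) (h : Ordinal.{0}) (b : Set S.carrier) : Prop :=
  IsChain (· ≤ ·) b ∧ ∀ α < h, ∃ t ∈ b, t ∈ S.Level α

/-- `S` is a `β⁺`-Kurepa tree: a tree of height `β⁺` all of whose levels are nonempty of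
cardinality at most `β`, with at least `β⁺⁺` cofinal branches. -/
def IsKurepaTree (β : Cardinal.{0}) (S : STree) : Prop :=
  (∀ t : S.carrier, S.ht t < (Order.succ β).ord) ∧
  (∀ α < (Order.succ β).ord, (S.Level α).Nonempty ∧ #(S.Level α) ≤ β) ∧
  Order.succ (Order.succ β) ≤ #{b : Set S.carrier | S.IsCofinalBranch (Order.succ β).ord b}

/-- A club subset of a linear order: unbounded, and closed under suprema of its bounded
nonempty initial parts. -/
def IsClubIn {α : Type*} [LinearOrder α] (C : Set α) : Prop :=
  (∀ x, ∃ y ∈ C, x < y) ∧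
  ∀ x, (C ∩ Set.Iio x).Nonempty → IsLUB (C ∩ Set.Iio x) x → x ∈ C

/-- `◊⁺_{β⁺}`: there is a sequence `⟨S_α : α < β⁺⟩` with each `S_α` a family of at most
`β` subsets of `α`, such that for every `X ⊆ β⁺` there is a club `C ⊆ β⁺` with
`X ∩ α ∈ S_α` and `C ∩ α ∈ S_α` for every `α ∈ C`.  Here `β⁺` is represented by the
canonical type of order type `(β⁺).ord`. -/
def DiamondPlus (β : Cardinal.{0}) : Prop :=
  ∃ S : (Order.succ β).ord.ToType → Set (Set (Order.succ β).ord.ToType),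
    (∀ α, #(S α) ≤ β ∧ ∀ s ∈ S α, s ⊆ Set.Iio α) ∧
    ∀ X : Set (Order.succ β).ord.ToType, ∃ C, IsClubIn C ∧
      ∀ α ∈ C, X ∩ Set.Iio α ∈ S α ∧ C ∩ Set.Iio α ∈ S α

namespace KurepaAux

variable {O : Type} [LinearOrder O] [WellFoundedLT O]

/-- Least upper bound of `c ∩ Iic γ` in a well-order. -/
noncomputable def lub (c : Set O) (γ : O) : O :=
  WellFounded.min wellFounded_lt (upperBounds (c ∩ Set.Iic γ)) ⟨γ, fun _ hx => hx.2⟩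

theorem isLUB_lub (c : Set O) (γ : O) : IsLUB (c ∩ Set.Iic γ) (lub c γ) := by
  constructor
  · exact WellFounded.min_mem _ _ _
  · intro u hu
    exact not_lt.1 (WellFounded.not_lt_min _ _ hu)

theorem lub_le_self (c : Set O) (γ : O) : lub c γ ≤ γ :=
  (isLUB_lub c γ).2 (fun _ hx => hx.2)

theorem lub_congr {c d : Set O} {γ δ : O} (h : c ∩ Set.Iic γ = d ∩ Set.Iic δ) :
    lub c γ = lub d δ :=
  (isLUB_lub c γ).unique (h ▸ isLUB_lub d δ)

theorem lub_eq_of_mem {c : Set O} {γ γ' : O} (h : γ' ∈ c ∩ Set.Iic γ)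
    (hub : γ' ∈ upperBounds (c ∩ Set.Iic γ)) : lub c γ = γ' :=
  (isLUB_lub c γ).unique ⟨hub, fun _ hu => hu h⟩

theorem lub_eq_self {c : Set O} {γ : O} (h : γ ∈ c) : lub c γ = γ :=
  lub_eq_of_mem ⟨h, le_rfl⟩ (fun _ hx => hx.2)

theorem mem_lub {c : Set O} {γ : O}
    (hcl : ∀ x, x ≤ γ → (c ∩ Set.Iio x).Nonempty → IsLUB (c ∩ Set.Iio x) x → x ∈ c)
    (hne : (c ∩ Set.Iic γ).Nonempty) : lub c γ ∈ c := by
  by_cases hmem : lub c γ ∈ c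
  · exact hmem
  · have hset : c ∩ Set.Iio (lub c γ) = c ∩ Set.Iic γ := by
      ext x
      constructor
      · rintro ⟨hx, hlt⟩
        exact ⟨hx, le_trans (le_of_lt hlt) (lub_le_self c γ)⟩
      · rintro ⟨hx, hle⟩
        refine ⟨hx, lt_of_le_of_ne ((isLUB_lub c γ).1 ⟨hx, hle⟩) ?_⟩
        rintro rfl
        exact hmem hx
    exact hcl _ (lub_le_self c γ) (hset ▸ hne) (hset ▸ isLUB_lub c γ)

/-! ### Nodes -/

abbrev Data (O : Type) := O × Set O × Set O

abbrev Node (O : Type) := O × Option (Data O)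

open Classical in
/-- Restriction of node data to index `γ`. -/
noncomputable def dres (d : Option (Data O)) (γ : O) : Option (Data O) :=
  match d with
  | none => none
  | some (ξ, s, c) =>
    if ξ ≤ γ then some (ξ, s, c)
    else if (c ∩ Set.Iic γ).Nonempty then
      some (lub c γ, s ∩ Set.Iio (lub c γ), c ∩ Set.Iio (lub c γ))
    else none

noncomputable def restrict (n : Node O) (γ : O) : Node O := (γ, dres n.2 γ)

@[simp] theorem restrict_fst (n : Node O) (γ : O) : (restrict n γ).1 = γ := rfl

theorem inter_Iio_inter {s : Set O} {a b : O} (h : b ≤ a) :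
    (s ∩ Set.Iio a) ∩ Set.Iio b = s ∩ Set.Iio b := by
  rw [inter_assoc, Set.Iio_inter_Iio, min_eq_right h]

theorem dres_dres {d : Option (Data O)} {γ₁ γ₂ : O} (h : γ₁ ≤ γ₂) :
    dres (dres d γ₂) γ₁ = dres d γ₁ := by
  classical
  rcases d with _ | ⟨⟨ξ, s, c⟩⟩
  · rfl
  by_cases h2 : ξ ≤ γ₂
  · rw [show dres (some (ξ, s, c)) γ₂ = some (ξ, s, c) by simp [dres, h2]]
  have h1 : ¬ ξ ≤ γ₁ := fun hc => h2 (hc.trans h)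
  by_cases hne : (c ∩ Set.Iic γ₂).Nonempty
  · rw [show dres (some (ξ, s, c)) γ₂ =
      some (lub c γ₂, s ∩ Set.Iio (lub c γ₂), c ∩ Set.Iio (lub c γ₂)) by simp [dres, h2, hne]]
    set l₂ := lub c γ₂ with hl₂
    by_cases hle : l₂ ≤ γ₁
    · -- sets `c ∩ Iic γ₁` and `c ∩ Iic γ₂` coincide
      have hsets : c ∩ Set.Iic γ₁ = c ∩ Set.Iic γ₂ := by
        ext x
        refine ⟨fun hx => ⟨hx.1, hx.2.trans h⟩, fun hx => ⟨hx.1, ?_⟩⟩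
        exact le_trans ((isLUB_lub c γ₂).1 hx) hle
      have hnel : (c ∩ Set.Iic γ₁).Nonempty := hsets ▸ hne
      have hlub : lub c γ₁ = l₂ := lub_congr hsets
      simp [dres, hle, h1, hnel, hlub]
    · have hγl : γ₁ < l₂ := not_le.1 hle
      have hsets : (c ∩ Set.Iio l₂) ∩ Set.Iic γ₁ = c ∩ Set.Iic γ₁ := by
        ext x
        refine ⟨fun hx => ⟨hx.1.1, hx.2⟩, fun hx => ⟨⟨hx.1, lt_of_le_of_lt hx.2 hγl⟩, hx.2⟩⟩
      by_cases hne1 : (c ∩ Set.Iic γ₁).Nonempty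
      · have hne1' : ((c ∩ Set.Iio l₂) ∩ Set.Iic γ₁).Nonempty := hsets ▸ hne1
        have hlub : lub (c ∩ Set.Iio l₂) γ₁ = lub c γ₁ := lub_congr hsets
        have hlle : lub c γ₁ ≤ γ₁ := lub_le_self c γ₁
        have e1 : (s ∩ Set.Iio l₂) ∩ Set.Iio (lub c γ₁) = s ∩ Set.Iio (lub c γ₁) :=
          inter_Iio_inter (hlle.trans hγl.le)
        have e2 : (c ∩ Set.Iio l₂) ∩ Set.Iio (lub c γ₁) = c ∩ Set.Iio (lub c γ₁) :=
          inter_Iio_inter (hlle.trans hγl.le)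
        simp [dres, hle, h1, hne1, hne1', hlub, e1, e2]
      · have hne1' : ¬ ((c ∩ Set.Iio l₂) ∩ Set.Iic γ₁).Nonempty := hsets ▸ hne1
        simp [dres, hle, h1, hne1, hne1']
  · have hne1 : ¬ (c ∩ Set.Iic γ₁).Nonempty := fun ⟨x, hx⟩ => hne ⟨x, hx.1, hx.2.trans h⟩
    simp [dres, h2, h1, hne, hne1]

/-! ### Validity -/

variable (S : O → Set (Set O))

def Valid (n : Node O) : Prop :=
  ∀ ξ s c, n.2 = some (ξ, s, c) →
    ξ ≤ n.1 ∧ s ∈ S ξ ∧ c ∈ S ξ ∧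
    (∀ x < ξ, (c ∩ Set.Iio x).Nonempty → IsLUB (c ∩ Set.Iio x) x → x ∈ c) ∧
    (∀ ζ ∈ c, s ∩ Set.Iio ζ ∈ S ζ ∧ c ∩ Set.Iio ζ ∈ S ζ)

theorem valid_none (γ : O) : Valid S (γ, none) := by
  intro ξ s c h
  simp at h

theorem valid_restrict {n : Node O} (hv : Valid S n) (γ : O) : Valid S (restrict n γ) := by
  classical
  intro ξ' s' c' h
  rcases hn : n.2 with _ | ⟨⟨ξ, s, c⟩⟩
  · rw [show (restrict n γ).2 = dres n.2 γ from rfl, hn] at h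
    simp [dres] at h
  obtain ⟨h1, h2, h3, h4, h5⟩ := hv ξ s c hn
  rw [show (restrict n γ).2 = dres n.2 γ from rfl, hn] at h
  by_cases hle : ξ ≤ γ
  · rw [show dres (some (ξ, s, c)) γ = some (ξ, s, c) by simp [dres, hle]] at h
    obtain ⟨rfl, rfl, rfl⟩ : ξ = ξ' ∧ s = s' ∧ c = c' := by
      simpa [Prod.ext_iff] using h
    exact ⟨hle, h2, h3, h4, h5⟩
  · have hγξ : γ < ξ := not_le.1 hle
    by_cases hne : (c ∩ Set.Iic γ).Nonempty
    · rw [show dres (some (ξ, s, c)) γ =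
        some (lub c γ, s ∩ Set.Iio (lub c γ), c ∩ Set.Iio (lub c γ)) by
          simp [dres, hle, hne]] at h
      set l := lub c γ with hl
      obtain ⟨rfl, rfl, rfl⟩ : l = ξ' ∧ s ∩ Set.Iio l = s' ∧ c ∩ Set.Iio l = c' := by
        simpa [Prod.ext_iff] using h
      have hlc : l ∈ c := mem_lub (fun x hx => h4 x (lt_of_le_of_lt hx hγξ)) hne
      have hlle : l ≤ γ := lub_le_self c γ
      refine ⟨hlle, (h5 l hlc).1, (h5 l hlc).2, ?_, ?_⟩
      · intro x hx hne' hlub'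
        rw [inter_Iio_inter hx.le] at hne' hlub'
        exact ⟨h4 x (hx.trans (lt_of_le_of_lt hlle hγξ)) hne' hlub', hx⟩
      · intro ζ hζ
        rw [inter_Iio_inter hζ.2.le, inter_Iio_inter hζ.2.le]
        exact h5 ζ hζ.1
    · rw [show dres (some (ξ, s, c)) γ = none by simp [dres, hle, hne]] at h
      cases h

/-! ### The tree order -/

def nlt (a b : Node O) : Prop := a.1 < b.1 ∧ a = restrict b a.1

def Carrier := {n : Node O // Valid S n}

instance : PartialOrder (Carrier S) where
  le a b := a.1 = b.1 ∨ nlt a.1 b.1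
  le_refl a := Or.inl rfl
  le_trans a b c hab hbc := by
    rcases hab with hab | hab
    · rcases hbc with hbc | hbc
      · exact Or.inl (hab.trans hbc)
      · exact Or.inr (hab ▸ hbc)
    · rcases hbc with hbc | hbc
      · exact Or.inr (hbc ▸ hab)
      · refine Or.inr ⟨hab.1.trans hbc.1, ?_⟩
        have e : a.1 = restrict (restrict c.1 b.1.1) a.1.1 := by rw [← hbc.2]; exact hab.2
        rw [e]
        exact congrArg (fun d => ((a.1.1 : O), d)) (dres_dres hab.1.le)
  le_antisymm a b hab hba := by
    rcases hab with hab | hab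
    · exact Subtype.ext hab
    · rcases hba with hba | hba
      · exact (Subtype.ext hba).symm
      · exact absurd (hab.1.trans hba.1) (lt_irrefl _)

variable {S}

theorem le_iff {a b : Carrier S} : a ≤ b ↔ (a.1 = b.1 ∨ nlt a.1 b.1) := Iff.rfl

theorem lt_iff {a b : Carrier S} : a < b ↔ nlt a.1 b.1 := by
  rw [lt_iff_le_not_ge, le_iff, le_iff]
  constructor
  · rintro ⟨hab | hab, h2⟩
    · exact absurd (Or.inl hab.symm) h2
    · exact hab
  · intro h
    refine ⟨Or.inr h, ?_⟩
    rintro (hc | hc)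
    · exact absurd (hc ▸ h.1) (lt_irrefl _)
    · exact absurd (h.1.trans hc.1) (lt_irrefl _)

/-! ### Predecessors and heights -/

noncomputable def predIso (b : Carrier S) :
    Subrel ((· < ·) : O → O → Prop) (Set.Iio b.1.1) ≃r predRel b where
  toFun γ := ⟨⟨restrict b.1 γ.1, valid_restrict S b.2 γ.1⟩, lt_iff.2 ⟨γ.2, rfl⟩⟩
  invFun a := ⟨a.1.1.1, (lt_iff.1 a.2).1⟩
  left_inv γ := rfl
  right_inv a := by
    refine Subtype.ext (Subtype.ext ?_)
    exact ((lt_iff.1 a.2).2).symm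
  map_rel_iff' := by
    intro γ₁ γ₂
    show (_ : Carrier S) < _ ↔ _
    rw [lt_iff]
    constructor
    · intro h
      exact h.1
    · intro h
      refine ⟨h, ?_⟩
      show restrict b.1 γ₁.1 = restrict (restrict b.1 γ₂.1) γ₁.1
      refine Prod.ext rfl ?_
      exact (dres_dres h.le).symm

theorem predWO (b : Carrier S) : IsWellOrder (Set.Iio b) (predRel b) :=
  haveI : IsWellOrder (Set.Iio b.1.1) (Subrel ((· < ·) : O → O → Prop) (Set.Iio b.1.1)) :=
    (inferInstance : IsWellOrder _ (Subrel ((· < ·) : O → O → Prop) (· ∈ Set.Iio b.1.1)))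
  @RelEmbedding.isWellOrder _ _ _ _ ((predIso b).symm.toRelEmbedding) this

theorem ht_eq (b : Carrier S) {i : IsWellOrder (Set.Iio b) (predRel b)} :
    @Ordinal.type _ (predRel b) i = Ordinal.typein ((· < ·) : O → O → Prop) b.1.1 := by
  rw [← Ordinal.type_subrel ((· < ·) : O → O → Prop) b.1.1]
  exact Ordinal.type_eq.2 ⟨(predIso b).symm⟩

/-! ### Branch nodes -/

open Classical in
noncomputable def bnode (X C : Set O) (γ : O) : Node O :=
  (γ, if (C ∩ Set.Iic γ).Nonempty then
        some (lub C γ, X ∩ Set.Iio (lub C γ), C ∩ Set.Iio (lub C γ))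
      else none)

theorem bnode_valid {X C : Set O} (hC : IsClubIn C)
    (hCS : ∀ α ∈ C, X ∩ Set.Iio α ∈ S α ∧ C ∩ Set.Iio α ∈ S α) (γ : O) :
    Valid S (bnode X C γ) := by
  classical
  intro ξ s c h
  simp only [bnode] at h
  by_cases hne : (C ∩ Set.Iic γ).Nonempty
  · rw [if_pos hne] at h
    set l := lub C γ with hl
    obtain ⟨rfl, rfl, rfl⟩ : l = ξ ∧ X ∩ Set.Iio l = s ∧ C ∩ Set.Iio l = c := by
      simpa [Prod.ext_iff] using h
    have hlC : l ∈ C := mem_lub (fun x _ => hC.2 x) hne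
    refine ⟨lub_le_self C γ, (hCS l hlC).1, (hCS l hlC).2, ?_, ?_⟩
    · intro x hx hne' hlub'
      rw [inter_Iio_inter hx.le] at hne' hlub'
      exact ⟨hC.2 x hne' hlub', hx⟩
    · intro ζ hζ
      rw [inter_Iio_inter hζ.2.le, inter_Iio_inter hζ.2.le]
      exact hCS ζ hζ.1
  · rw [if_neg hne] at h
    cases h

theorem bnode_restrict {X C : Set O} (hC : IsClubIn C) {γ₁ γ₂ : O} (h : γ₁ ≤ γ₂) :
    restrict (bnode X C γ₂) γ₁ = bnode X C γ₁ := by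
  classical
  refine Prod.ext rfl ?_
  show dres (bnode X C γ₂).2 γ₁ = (bnode X C γ₁).2
  by_cases hne : (C ∩ Set.Iic γ₂).Nonempty
  · rw [show (bnode X C γ₂).2 = some (lub C γ₂, X ∩ Set.Iio (lub C γ₂), C ∩ Set.Iio (lub C γ₂))
      by simp [bnode, hne]]
    set l₂ := lub C γ₂ with hl₂
    have hl₂C : l₂ ∈ C := mem_lub (fun x _ => hC.2 x) hne
    by_cases hle : l₂ ≤ γ₁
    · have hne1 : (C ∩ Set.Iic γ₁).Nonempty := ⟨l₂, hl₂C, hle⟩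
      have hsets : C ∩ Set.Iic γ₁ = C ∩ Set.Iic γ₂ := by
        ext x
        refine ⟨fun hx => ⟨hx.1, hx.2.trans h⟩, fun hx => ⟨hx.1, ?_⟩⟩
        exact le_trans ((isLUB_lub C γ₂).1 hx) hle
      have hlub : lub C γ₁ = l₂ := lub_congr hsets
      simp [dres, hle, bnode, hne1, hlub]
    · have hγl : γ₁ < l₂ := not_le.1 hle
      have hsets : (C ∩ Set.Iio l₂) ∩ Set.Iic γ₁ = C ∩ Set.Iic γ₁ := by
        ext x
        refine ⟨fun hx => ⟨hx.1.1, hx.2⟩, fun hx => ⟨⟨hx.1, lt_of_le_of_lt hx.2 hγl⟩, hx.2⟩⟩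
      by_cases hne1 : (C ∩ Set.Iic γ₁).Nonempty
      · have hne1' : ((C ∩ Set.Iio l₂) ∩ Set.Iic γ₁).Nonempty := hsets ▸ hne1
        have hlub : lub (C ∩ Set.Iio l₂) γ₁ = lub C γ₁ := lub_congr hsets
        have hlle : lub C γ₁ ≤ γ₁ := lub_le_self C γ₁
        have e1 : (X ∩ Set.Iio l₂) ∩ Set.Iio (lub C γ₁) = X ∩ Set.Iio (lub C γ₁) :=
          inter_Iio_inter (hlle.trans hγl.le)
        have e2 : (C ∩ Set.Iio l₂) ∩ Set.Iio (lub C γ₁) = C ∩ Set.Iio (lub C γ₁) :=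
          inter_Iio_inter (hlle.trans hγl.le)
        simp [dres, hle, bnode, hne1, hne1', hlub, e1, e2]
      · have hne1' : ¬ ((C ∩ Set.Iio l₂) ∩ Set.Iic γ₁).Nonempty := hsets ▸ hne1
        simp [dres, hle, bnode, hne1, hne1']
  · have hne1 : ¬ (C ∩ Set.Iic γ₁).Nonempty := fun ⟨x, hx⟩ => hne ⟨x, hx.1, hx.2.trans h⟩
    simp [dres, bnode, hne, hne1]

open Classical in
noncomputable def decode {γ : O} (u : Option (Σ ξ : Set.Iic γ, ↥(S ξ.1) × ↥(S ξ.1))) :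
    ↥{t : Carrier S | t.1.1 = γ} :=
  match u with
  | none => ⟨⟨(γ, none), valid_none S γ⟩, rfl⟩
  | some ⟨ξ, s, c⟩ =>
    if h : Valid S (γ, some (ξ.1, s.1, c.1)) then ⟨⟨(γ, some (ξ.1, s.1, c.1)), h⟩, rfl⟩
    else ⟨⟨(γ, none), valid_none S γ⟩, rfl⟩

theorem decode_surj {γ : O} : Function.Surjective (decode (S := S) (γ := γ)) := by
  rintro ⟨⟨⟨γ', d⟩, hv⟩, ht⟩
  obtain rfl : γ' = γ := ht
  rcases d with _ | ⟨⟨ξ, s, c⟩⟩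
  · exact ⟨none, Subtype.ext (Subtype.ext rfl)⟩
  · have hp := hv ξ s c rfl
    refine ⟨some ⟨⟨ξ, hp.1⟩, ⟨s, hp.2.1⟩, ⟨c, hp.2.2.1⟩⟩, ?_⟩
    simp only [decode]
    rw [dif_pos hv]

theorem card_level_le {β : Cardinal.{0}} (hβ : ℵ₀ ≤ β)
    (hS : ∀ α, #(S α) ≤ β) (γ : O) (hIic : #(Set.Iic γ) ≤ β) :
    #{t : Carrier S | t.1.1 = γ} ≤ β := by
  have h1 := Cardinal.mk_le_of_surjective (decode_surj (S := S) (γ := γ))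
  refine h1.trans ?_
  rw [Cardinal.mk_option, Cardinal.mk_sigma]
  have h2 : (Cardinal.sum fun ξ : Set.Iic γ => #(↥(S ξ.1) × ↥(S ξ.1))) ≤
      Cardinal.sum fun _ : Set.Iic γ => β := by
    apply Cardinal.sum_le_sum
    intro ξ
    calc #(↥(S ξ.1) × ↥(S ξ.1)) = #(S ξ.1) * #(S ξ.1) := by
          rw [Cardinal.mk_prod]; simp
    _ ≤ β * β := mul_le_mul' (hS _) (hS _)
    _ = β := Cardinal.mul_eq_self hβ
  calc _ ≤ (Cardinal.sum fun _ : ↥(Set.Iic γ) => β) + 1 := add_le_add_left h2 1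
  _ = #(Set.Iic γ) * β + 1 := by rw [Cardinal.sum_const']
  _ ≤ β * β + 1 := add_le_add_left (mul_le_mul' hIic le_rfl) 1
  _ = β + 1 := by rw [Cardinal.mul_eq_self hβ]
  _ ≤ β + β := add_le_add_right (le_trans Cardinal.one_le_aleph0 hβ) β
  _ = β := Cardinal.add_eq_self hβ


theorem main {β : Cardinal.{0}} (hβ : ℵ₀ ≤ β)
    (hord : Ordinal.type ((· < ·) : O → O → Prop) = (Order.succ β).ord)
    {S : O → Set (Set O)} (hS1 : ∀ α, #(S α) ≤ β)
    (hS2 : ∀ X : Set O, ∃ C, IsClubIn C ∧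
      ∀ α ∈ C, X ∩ Set.Iio α ∈ S α ∧ C ∩ Set.Iio α ∈ S α) :
    ∃ T : STree, IsKurepaTree β T := by
  classical
  choose Cf hCf1 hCf2 using hS2
  let T : STree := { carrier := Carrier S, po := inferInstance, wo := fun t => predWO t }
  have hht : ∀ t : T.carrier, T.ht t = Ordinal.typein ((· < ·) : O → O → Prop) t.1.1 := by
    intro t
    exact ht_eq (i := T.wo t) t
  refine ⟨T, ?_, ?_, ?_⟩
  · intro t
    rw [hht t, ← hord]
    exact Ordinal.typein_lt_type _ _
  · intro α hα
    obtain ⟨γ, hγ⟩ := Ordinal.typein_surj ((· < ·) : O → O → Prop)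
      (by rw [hord]; exact hα)
    have hlev : T.Level α = {t : T.carrier | t.1.1 = γ} := by
      have hinj := Ordinal.typein_injective ((· < ·) : O → O → Prop)
      ext t
      show T.ht t = α ↔ _
      rw [hht t, ← hγ]
      exact ⟨fun h => hinj h, fun h => by rw [h]⟩
    constructor
    · rw [hlev]
      exact ⟨⟨(γ, none), valid_none S γ⟩, rfl⟩
    · rw [hlev]
      have hIio : #(Set.Iio γ) ≤ β := by
        have h1 : #(Set.Iio γ) = (Ordinal.typein ((· < ·) : O → O → Prop) γ).card :=
          Ordinal.card_typein (r := ((· < ·) : O → O → Prop)) γ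
        rw [h1]
        have h2 : Ordinal.typein ((· < ·) : O → O → Prop) γ < (Order.succ β).ord := by
          rw [← hord]; exact Ordinal.typein_lt_type _ _
        exact Order.lt_succ_iff.1 (Cardinal.lt_ord.1 h2)
      have hIic : #(Set.Iic γ) ≤ β := by
        rw [← Set.Iio_insert]
        refine le_trans (Cardinal.mk_insert_le) ?_
        calc #(Set.Iio γ) + 1 ≤ β + β :=
          add_le_add hIio (le_trans Cardinal.one_le_aleph0 hβ)
        _ = β := Cardinal.add_eq_self hβ
      exact card_level_le hβ hS1 γ hIic
  · -- branches
    let bFun : Set O → O → T.carrier := fun X γ =>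
      ⟨bnode X (Cf X) γ, bnode_valid (hCf1 X) (hCf2 X) γ⟩
    let B : Set O → Set T.carrier := fun X => Set.range (bFun X)
    have hbranch : ∀ X, T.IsCofinalBranch (Order.succ β).ord (B X) := by
      intro X
      constructor
      · rintro a ⟨γ₁, rfl⟩ b ⟨γ₂, rfl⟩ hne
        rcases lt_trichotomy γ₁ γ₂ with h | h | h
        · exact Or.inl (Or.inr ⟨h, (bnode_restrict (hCf1 X) h.le).symm⟩)
        · exact absurd (by rw [h]) hne
        · exact Or.inr (Or.inr ⟨h, (bnode_restrict (hCf1 X) h.le).symm⟩)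
      · intro α hα
        obtain ⟨γ, hγ⟩ := Ordinal.typein_surj ((· < ·) : O → O → Prop)
          (by rw [hord]; exact hα)
        exact ⟨bFun X γ, Set.mem_range_self γ, by rw [STree.Level, Set.mem_setOf_eq, hht]; exact hγ⟩
    have key : ∀ X Y : Set O, (∀ γ, bnode X (Cf X) γ = bnode Y (Cf Y) γ) → X ⊆ Y := by
      intro X Y hnode δ hδ
      obtain ⟨γ, hγC, hδγ⟩ := (hCf1 X).1 δ
      have h2 := congrArg Prod.snd (hnode γ)
      have hne : (Cf X ∩ Set.Iic γ).Nonempty := ⟨γ, hγC, le_rfl⟩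
      rw [show (bnode X (Cf X) γ).2 = some (lub (Cf X) γ, X ∩ Set.Iio (lub (Cf X) γ),
        (Cf X) ∩ Set.Iio (lub (Cf X) γ)) by simp [bnode, hne]] at h2
      rw [lub_eq_self hγC] at h2
      by_cases hneY : (Cf Y ∩ Set.Iic γ).Nonempty
      · rw [show (bnode Y (Cf Y) γ).2 = some (lub (Cf Y) γ, Y ∩ Set.Iio (lub (Cf Y) γ),
          (Cf Y) ∩ Set.Iio (lub (Cf Y) γ)) by simp [bnode, hneY]] at h2
        have h3 : γ = lub (Cf Y) γ ∧ X ∩ Set.Iio γ = Y ∩ Set.Iio (lub (Cf Y) γ) := by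
          have := Option.some.inj h2
          exact ⟨congrArg Prod.fst this, congrArg (fun p => p.2.1) this⟩
        have h4 : X ∩ Set.Iio γ = Y ∩ Set.Iio γ := by rw [h3.2, ← h3.1]
        have hmem : δ ∈ X ∩ Set.Iio γ := ⟨hδ, hδγ⟩
        rw [h4] at hmem
        exact hmem.1
      · rw [show (bnode Y (Cf Y) γ).2 = none by simp [bnode, hneY]] at h2
        cases h2
    have hinj : Function.Injective
        (fun X => (⟨B X, hbranch X⟩ :
          {b : Set T.carrier // T.IsCofinalBranch (Order.succ β).ord b})) := by
      intro X Y h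
      have hset : B X = B Y := congrArg Subtype.val h
      have hnode : ∀ γ, bnode X (Cf X) γ = bnode Y (Cf Y) γ := by
        intro γ
        have hmem : bFun X γ ∈ B Y := hset ▸ Set.mem_range_self γ
        obtain ⟨γ', hγ'⟩ := hmem
        have hval : bnode Y (Cf Y) γ' = bnode X (Cf X) γ := congrArg Subtype.val hγ'
        have hfst : γ' = γ := congrArg Prod.fst hval
        subst hfst
        exact hval.symm
      exact Set.Subset.antisymm (key X Y hnode) (key Y X (fun γ => (hnode γ).symm))
    have hcard : #(Set O) ≤ #{b : Set T.carrier | T.IsCofinalBranch (Order.succ β).ord b} :=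
      Cardinal.mk_le_of_injective hinj
    refine le_trans ?_ hcard
    have hmkO : #O = Order.succ β := by
      have h1 : #O = (Ordinal.type ((· < ·) : O → O → Prop)).card :=
        (Ordinal.card_type _).symm
      rw [h1, hord, Cardinal.card_ord]
    have hsetO : #(Set O) = 2 ^ (Order.succ β) := by
      rw [Cardinal.mk_set, hmkO]
    rw [hsetO]
    exact Order.succ_le_iff.2 (Cardinal.cantor _)

end KurepaAux

/-- if `◊⁺_{β⁺}` holds for a regular cardinal `β`, then there exists a
`β⁺`-Kurepa tree. -/
theorem stmt12 (β : Cardinal.{0}) (hβ : β.IsRegular) (hD : DiamondPlus β) :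
    ∃ S : STree, IsKurepaTree β S := by
  obtain ⟨S, hS1, hS2⟩ := hD
  exact KurepaAux.main hβ.aleph0_le (Ordinal.type_toType _) (fun α => (hS1 α).1) hS2
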